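/- For n = 2r + 1 odd, the topological Euler characteristic of the GIT quotient Z_n = (P^1)^n //_{O(1,...,1)} Gm satisfies e(Z_n) = n · binomial(n−1, r) = ∑_{j=0}^{r} (n − 2j) · binomial(n, j). -/

import Mathlib

/-!
STATEMENT 14: For `n = 2r + 1` odd, the topological Euler characteristic of the GIT quotient
`Z_n = (P^1)^n // Gm` satisfies `e(Z_n) = n·C(n−1, r) = ∑_{j=0}^{r} (n−2j)·C(n, j)`.

Formalization: `Z_n` is a smooth projective toric variety whose polytope is the cross
section of the `n`-cube by the hyperplane normal to and bisecting the main diagonal, so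
`e(Z_n)` equals the number of edges of the `n`-cube crossing that hyperplane.  An edge of
the `n`-cube is a pair `(v, i)` with `v : Fin n → Bool` a vertex and `i` a direction with
`v i = false`; it crosses the bisecting hyperplane iff the vertex `v` has exactly `r`
coordinates equal to `true` (its endpoints then have coordinate sums `r` and `r + 1`).
The statement is that this count equals `n·C(n−1, r)`, together with the combinatorial
identity `n·C(n−1, r) = ∑_{j=0}^{r} (n−2j)·C(n, j)`.
-/

open Finset

private lemma succ_mul_choose (n r : ℕ) (hn : 1 ≤ n) :
    n * (n - 1).choose r = n.choose (r + 1) * (r + 1) := by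
  have := Nat.add_one_mul_choose_eq (n - 1) r
  rwa [Nat.sub_add_cancel hn] at this

private lemma sum_ident (n r : ℕ) (h : 2 * r ≤ n) :
    n * (n - 1).choose r = ∑ j ∈ Finset.range (r + 1), (n - 2 * j) * n.choose j := by
  induction r with
  | zero => simp
  | succ r ih =>
    have hn : 1 ≤ n := by omega
    rw [Finset.sum_range_succ, ← ih (by omega)]
    have h1 : n * (n - 1).choose r = n.choose (r + 1) * (r + 1) :=
      succ_mul_choose n r hn
    have hc : n.choose (r + 1) = (n - 1).choose r + (n - 1).choose (r + 1) := by
      conv_lhs => rw [show n = (n - 1) + 1 by omega]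
      exact Nat.choose_succ_succ (n - 1) r
    have hle : 2 * (r + 1) ≤ n := h
    zify [hle] at h1 hc ⊢
    linear_combination (-2 : ℤ) * h1 - (n : ℤ) * hc

private lemma count_bool_vectors (n r : ℕ) :
    ((Finset.univ : Finset (Fin n → Bool)).filter
      (fun v => (Finset.univ.filter (fun i => v i = true)).card = r)).card = n.choose r := by
  classical
  have hrhs : n.choose r
      = ((Finset.univ : Finset (Fin n)).powersetCard r).card := by
    rw [Finset.card_powersetCard, Finset.card_univ, Fintype.card_fin]
  rw [hrhs]
  refine Finset.card_bij' (fun v _ => Finset.univ.filter (fun i => v i = true))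
      (fun s _ => fun i => decide (i ∈ s)) ?_ ?_ ?_ ?_
  · intro v hv
    simp only [Finset.mem_filter] at hv
    simpa [Finset.mem_powersetCard_univ] using hv.2
  · intro s hs
    simp only [Finset.mem_powersetCard_univ] at hs
    simp only [Finset.mem_filter, Finset.mem_univ, true_and]
    rw [← hs]
    congr 1
    ext i
    simp
  · intro v hv
    funext i
    cases hvi : v i <;> simp [hvi]
  · intro s hs
    ext i
    simp

theorem euler_char_git_quotient_odd (n r : ℕ) (h : n = 2 * r + 1) :
    (Finset.univ.filter (fun p : (Fin n → Bool) × Fin n =>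
        p.1 p.2 = false ∧
          (Finset.univ.filter (fun i => p.1 i = true)).card = r)).card
      = n * (n - 1).choose r ∧
    n * (n - 1).choose r = ∑ j ∈ Finset.range (r + 1), (n - 2 * j) * n.choose j := by
  classical
  constructor
  · set S := (Finset.univ.filter (fun p : (Fin n → Bool) × Fin n =>
        p.1 p.2 = false ∧
          (Finset.univ.filter (fun i => p.1 i = true)).card = r)) with hSdef
    have hcard : S.card = ∑ v : Fin n → Bool, (S.filter (fun p => p.1 = v)).card :=
      Finset.card_eq_sum_card_fiberwise (fun x _ => Finset.mem_univ _)
    have hfiber : ∀ v : Fin n → Bool, (S.filter (fun p => p.1 = v)).card =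
        if (Finset.univ.filter (fun i => v i = true)).card = r then r + 1 else 0 := by
      intro v
      split_ifs with hv
      · have hb : (S.filter (fun p => p.1 = v)).card
            = (Finset.univ.filter (fun i => v i = false)).card := by
          refine Finset.card_bij' (fun p _ => p.2) (fun i _ => (v, i)) ?_ ?_ ?_ ?_
          · intro p hp
            simp only [hSdef, Finset.mem_filter, Finset.mem_univ, true_and] at hp
            simp only [Finset.mem_filter, Finset.mem_univ, true_and]
            rw [← hp.2]
            exact hp.1.1
          · intro i hi
            simp only [Finset.mem_filter, Finset.mem_univ, true_and] at hi
            simp only [hSdef, Finset.mem_filter, Finset.mem_univ, true_and]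
            exact ⟨⟨hi, hv⟩, trivial⟩
          · intro p hp
            rw [Finset.mem_filter] at hp
            obtain ⟨-, h2⟩ := hp
            subst h2
            rfl
          · intro i hi
            rfl
        rw [hb]
        have hsplit : (Finset.univ.filter (fun i => v i = false)).card
            + (Finset.univ.filter (fun i => v i = true)).card
            = (Finset.univ : Finset (Fin n)).card := by
          have heq : (Finset.univ.filter (fun i => v i = false))
              = Finset.univ.filter (fun i => ¬ v i = true) := by
            apply Finset.filter_congr
            intro i _
            cases v i <;> simp
          rw [heq, add_comm]
          exact Finset.card_filter_add_card_filter_not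
            (p := fun i => v i = true)
        rw [Finset.card_univ, Fintype.card_fin, hv] at hsplit
        omega
      · rw [Finset.card_eq_zero]
        rw [Finset.filter_eq_empty_iff]
        intro p hp
        simp only [hSdef, Finset.mem_filter, Finset.mem_univ, true_and] at hp
        intro hpv
        rw [hpv] at hp
        exact hv hp.2
    rw [hcard]
    simp_rw [hfiber]
    rw [Finset.sum_ite, Finset.sum_const, Finset.sum_const_zero, add_zero, smul_eq_mul]
    rw [count_bool_vectors n r]
    have hsymm : n.choose (r + 1) = n.choose r := by
      rw [show r + 1 = n - r by omega]
      exact Nat.choose_symm (by omega)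
    rw [succ_mul_choose n r (by omega), hsymm]
  · exact sum_ident n r (by omega)
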